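/- arXiv:1411.3206 — 3 statements merged into one kernel-verified Lean document; each statement's English description precedes it below -/
import Mathlib

section
/- Bernstein's multiplier estimate: let s > n/2 and 1 ≤ r ≤ ∞. Then there exists a constant C > 0 (depending only on n, s, r) such that for every Schwartz function φ on ℝⁿ and every f ∈ L^r(ℝⁿ), ‖(2π)^{−n/2} (𝓕^{−1}φ) ∗ f‖_{L^r} ≤ C ‖⟨·⟩^s φ̂‖_{L²} ‖f‖_{L^r}, where ⟨ξ⟩ = (1+|ξ|²)^{1/2} and (2π)^{−n/2}(𝓕^{−1}φ) ∗ f = 𝓕^{−1}(φ · 𝓕f); i.e. ‖𝓕^{−1}(φ 𝓕f)‖_{L^r} ≤ C ‖φ‖_{H^s} ‖f‖_{L^r}. -/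
open MeasureTheory Complex Filter
open scoped Real ENNReal NNReal BigOperators

noncomputable section

abbrev E (n : ℕ) := EuclideanSpace ℝ (Fin n)

/-- The Fourier transform `f̂(ξ) = (2π)^{-n/2} ∫ f(x) e^{-i x·ξ} dx`. -/
def FT (n : ℕ) (f : E n → ℂ) (ξ : E n) : ℂ :=
  (((2 * Real.pi) ^ (-(n : ℝ) / 2) : ℝ) : ℂ) *
    ∫ x : E n, f x * Complex.exp (-(Complex.I * ((inner ℝ x ξ : ℝ) : ℂ)))

/-- The inverse Fourier transform. -/
def invFT (n : ℕ) (g : E n → ℂ) (x : E n) : ℂ :=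
  (((2 * Real.pi) ^ (-(n : ℝ) / 2) : ℝ) : ℂ) *
    ∫ ξ : E n, g ξ * Complex.exp (Complex.I * ((inner ℝ x ξ : ℝ) : ℂ))

/-- The Sobolev `H^s` norm `‖⟨·⟩^s φ̂‖_{L²}` of a function. -/
def HsNorm (n : ℕ) (s : ℝ) (φ : E n → ℂ) : ℝ :=
  Real.sqrt (∫ ξ : E n, (1 + ‖ξ‖ ^ 2) ^ s * ‖FT n φ ξ‖ ^ 2)

lemma young_lintegral {n : ℕ} {p : ℝ} (hp : 1 ≤ p) (K F : E n → ℝ≥0∞)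
    (hK : Measurable K) (hF : Measurable F) :
    ∫⁻ x, (∫⁻ y, K y * F (x - y)) ^ p ≤ ((∫⁻ y, K y) ^ p) * ∫⁻ z, F z ^ p := by
  have hFsub : ∀ (pw : ℝ) (y : E n), ∫⁻ x, F (x - y) ^ pw = ∫⁻ z, F z ^ pw := by
    intro pw y
    exact (measurePreserving_sub_right volume y).lintegral_comp (hF.pow_const pw)
  rcases eq_or_lt_of_le hp with hp1 | hp1
  · subst hp1
    simp only [ENNReal.rpow_one]
    have hmeas2 : Measurable (Function.uncurry fun x y : E n => K y * F (x - y)) :=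
      (hK.comp measurable_snd).mul (hF.comp (measurable_fst.sub measurable_snd))
    rw [lintegral_lintegral_swap hmeas2.aemeasurable]
    calc ∫⁻ y, ∫⁻ x, K y * F (x - y)
        = ∫⁻ y, K y * ∫⁻ x, F (x - y) := by
          refine lintegral_congr fun y => ?_
          rw [lintegral_const_mul _ (show Measurable fun x : E n => F (x - y) by fun_prop)]
      _ = ∫⁻ y, K y * ∫⁻ z, F z := by
          refine lintegral_congr fun y => ?_
          congr 1
          simpa using hFsub 1 y
      _ = (∫⁻ y, K y) * ∫⁻ z, F z := lintegral_mul_const _ hK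
      _ ≤ _ := le_rfl
  · set q : ℝ := p / (p - 1) with hqdef
    have hq : p.HolderConjugate q := Real.HolderConjugate.conjExponent hp1
    have hp0 : (0:ℝ) < p := hq.pos
    have hpq : p / q = p - 1 := by
      rw [hqdef]
      field_simp
    set I := ∫⁻ y, K y with hIdef
    have key : ∀ x : E n, (∫⁻ y, K y * F (x - y)) ≤
        ((∫⁻ y, K y * F (x - y) ^ p) ^ (1/p)) * I ^ (1/q) := by
      intro x
      have h1 : ∀ y : E n, K y * F (x - y)
          = ((K y * F (x - y) ^ p) ^ (1/p)) * ((K y) ^ (1/q)) := by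
        intro y
        rw [ENNReal.mul_rpow_of_nonneg _ _ (by positivity : (0:ℝ) ≤ 1/p),
          ← ENNReal.rpow_mul, mul_one_div, div_self hp0.ne', ENNReal.rpow_one,
          mul_comm ((K y) ^ (1/p) * F (x - y)) ((K y) ^ (1/q)), ← mul_assoc,
          ← ENNReal.rpow_add_of_nonneg _ _ hq.symm.one_div_nonneg hq.one_div_nonneg,
          one_div, one_div, add_comm, hq.inv_add_inv_eq_one, ENNReal.rpow_one]
      calc ∫⁻ y, K y * F (x - y)
          = ∫⁻ y, ((fun y => (K y * F (x - y) ^ p) ^ (1/p)) * (fun y => (K y) ^ (1/q))) y := by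
            refine lintegral_congr fun y => ?_
            simpa using h1 y
        _ ≤ (∫⁻ y, ((K y * F (x - y) ^ p) ^ (1/p)) ^ p) ^ (1/p) *
              (∫⁻ y, ((K y) ^ (1/q)) ^ q) ^ (1/q) := by
            refine ENNReal.lintegral_mul_le_Lp_mul_Lq volume hq ?_ ?_
            · exact (((hK.mul ((show Measurable fun y : E n => F (x - y) by fun_prop).pow_const p)).pow_const _).aemeasurable)
            · exact (hK.pow_const _).aemeasurable
        _ = ((∫⁻ y, K y * F (x - y) ^ p) ^ (1/p)) * I ^ (1/q) := by
            congr 1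
            · congr 1
              refine lintegral_congr fun y => ?_
              rw [← ENNReal.rpow_mul, one_div, inv_mul_cancel₀ hp0.ne', ENNReal.rpow_one]
            · congr 1
              refine lintegral_congr fun y => ?_
              rw [← ENNReal.rpow_mul, one_div, inv_mul_cancel₀ hq.symm.pos.ne', ENNReal.rpow_one]
    have step : ∫⁻ x, (∫⁻ y, K y * F (x - y)) ^ p ≤
        (∫⁻ x, ∫⁻ y, K y * F (x - y) ^ p) * I ^ (p/q) := by
      have : ∀ x : E n, (∫⁻ y, K y * F (x - y)) ^ p ≤
          (∫⁻ y, K y * F (x - y) ^ p) * I ^ (p/q) := by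
        intro x
        calc (∫⁻ y, K y * F (x - y)) ^ p
            ≤ (((∫⁻ y, K y * F (x - y) ^ p) ^ (1/p)) * I ^ (1/q)) ^ p :=
              ENNReal.rpow_le_rpow (key x) hp0.le
          _ = (∫⁻ y, K y * F (x - y) ^ p) * I ^ (p/q) := by
              rw [ENNReal.mul_rpow_of_nonneg _ _ hp0.le, ← ENNReal.rpow_mul,
                one_div, inv_mul_cancel₀ hp0.ne', ENNReal.rpow_one, ← ENNReal.rpow_mul,
                one_div, inv_mul_eq_div]
      calc ∫⁻ x, (∫⁻ y, K y * F (x - y)) ^ p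
          ≤ ∫⁻ x, (∫⁻ y, K y * F (x - y) ^ p) * I ^ (p/q) := lintegral_mono this
        _ = (∫⁻ x, ∫⁻ y, K y * F (x - y) ^ p) * I ^ (p/q) := by
            refine lintegral_mul_const _ ?_
            exact Measurable.lintegral_prod_right
              ((hK.comp measurable_snd).mul
                ((hF.comp (measurable_fst.sub measurable_snd)).pow_const p))
    have swap2 : (∫⁻ x, ∫⁻ y, K y * F (x - y) ^ p) = I * ∫⁻ z, F z ^ p := by
      rw [lintegral_lintegral_swap]
      · calc ∫⁻ y, ∫⁻ x, K y * F (x - y) ^ p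
            = ∫⁻ y, K y * ∫⁻ x, F (x - y) ^ p := by
              refine lintegral_congr fun y => ?_
              rw [lintegral_const_mul _ (show Measurable fun x : E n => F (x - y) ^ p by fun_prop)]
          _ = ∫⁻ y, K y * ∫⁻ z, F z ^ p := by
              refine lintegral_congr fun y => ?_
              rw [hFsub p y]
          _ = I * ∫⁻ z, F z ^ p := lintegral_mul_const _ hK
      · exact ((hK.comp measurable_snd).mul
          ((hF.comp (measurable_fst.sub measurable_snd)).pow_const p)).aemeasurable
    calc ∫⁻ x, (∫⁻ y, K y * F (x - y)) ^ p
        ≤ (I * ∫⁻ z, F z ^ p) * I ^ (p/q) := by rw [← swap2]; exact step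
      _ = I ^ p * ∫⁻ z, F z ^ p := by
          have hIp : I ^ (1 : ℝ) * I ^ (p/q) = I ^ p := by
            rw [← ENNReal.rpow_add_of_nonneg _ _ zero_le_one (div_nonneg hp0.le hq.symm.nonneg)]
            congr 1
            rw [hpq]; ring
          rw [← hIp, ENNReal.rpow_one]; ring

lemma young {n : ℕ} (k f : E n → ℂ) (hk : Measurable k)
    (hf : AEStronglyMeasurable f (volume : Measure (E n))) (r : ℝ≥0∞) (hr : 1 ≤ r) :
    eLpNorm (fun x => ∫ y, k y * f (x - y)) r volume ≤
      (∫⁻ y, (‖k y‖₊ : ℝ≥0∞)) * eLpNorm f r volume := by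
  obtain ⟨g, hgm, hfg⟩ := hf
  have hgmeas : Measurable g := hgm.measurable
  have hconv : (fun x => ∫ y, k y * f (x - y)) = fun x => ∫ y, k y * g (x - y) := by
    funext x
    refine integral_congr_ae ?_
    have h0 : ∀ᵐ y ∂(volume : Measure (E n)), f (x - y) = g (x - y) :=
      (Measure.measurePreserving_sub_left volume x).quasiMeasurePreserving.tendsto_ae.eventually hfg
    filter_upwards [h0] with y hy
    rw [hy]
  rw [hconv, eLpNorm_congr_ae hfg]
  set K : E n → ℝ≥0∞ := fun y => (‖k y‖₊ : ℝ≥0∞) with hKdef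
  set F : E n → ℝ≥0∞ := fun z => (‖g z‖₊ : ℝ≥0∞) with hFdef
  have hKm : Measurable K := hk.enorm
  have hFm : Measurable F := hgmeas.enorm
  have pointwise : ∀ x : E n, (‖∫ y, k y * g (x - y)‖₊ : ℝ≥0∞) ≤ ∫⁻ y, K y * F (x - y) := by
    intro x
    refine (enorm_integral_le_lintegral_enorm _).trans_eq ?_
    refine lintegral_congr fun y => ?_
    simp [hKdef, hFdef, nnnorm_mul, ENNReal.coe_mul]
    rfl
  rcases eq_or_ne r ⊤ with htop | htop
  · subst htop
    rw [eLpNorm_exponent_top, eLpNorm_exponent_top]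
    have hbound : ∀ x : E n, (‖∫ y, k y * g (x - y)‖₊ : ℝ≥0∞) ≤
        (∫⁻ y, K y) * eLpNormEssSup g volume := by
      intro x
      refine (pointwise x).trans ?_
      have h1 : ∀ᵐ y ∂(volume : Measure (E n)), F (x - y) ≤ eLpNormEssSup g volume :=
        (Measure.measurePreserving_sub_left volume x).quasiMeasurePreserving.tendsto_ae.eventually
          (ae_le_eLpNormEssSup (f := g))
      calc ∫⁻ y, K y * F (x - y) ≤ ∫⁻ y, K y * eLpNormEssSup g volume := by
            refine lintegral_mono_ae ?_
            filter_upwards [h1] with y hy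
            exact mul_le_mul_right hy _
        _ = (∫⁻ y, K y) * eLpNormEssSup g volume := lintegral_mul_const _ hKm
    rw [eLpNormEssSup]
    exact essSup_le_of_ae_le _ (Filter.Eventually.of_forall hbound)
  · have hr0 : r ≠ 0 := by
      intro h; rw [h] at hr; simp at hr
    set p : ℝ := r.toReal with hpdef
    have hp : 1 ≤ p := by
      rw [hpdef, ← ENNReal.toReal_one]
      exact ENNReal.toReal_mono htop hr
    have hp0 : (0:ℝ) < p := lt_of_lt_of_le zero_lt_one hp
    rw [eLpNorm_eq_lintegral_rpow_enorm_toReal hr0 htop, eLpNorm_eq_lintegral_rpow_enorm_toReal hr0 htop]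
    calc (∫⁻ x, (‖∫ y, k y * g (x - y)‖₊ : ℝ≥0∞) ^ p) ^ (1/p)
        ≤ (∫⁻ x, (∫⁻ y, K y * F (x - y)) ^ p) ^ (1/p) := by
          refine ENNReal.rpow_le_rpow ?_ (by positivity)
          exact lintegral_mono fun x => ENNReal.rpow_le_rpow (pointwise x) hp0.le
      _ ≤ (((∫⁻ y, K y) ^ p) * ∫⁻ z, F z ^ p) ^ (1/p) :=
          ENNReal.rpow_le_rpow (young_lintegral hp K F hKm hFm) (by positivity)
      _ = (∫⁻ y, K y) * (∫⁻ z, F z ^ p) ^ (1/p) := by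
          rw [ENNReal.mul_rpow_of_nonneg _ _ (by positivity), ← ENNReal.rpow_mul,
            mul_one_div, div_self hp0.ne', ENNReal.rpow_one]
      _ = (∫⁻ y, K y) * (∫⁻ z, (‖g z‖₊ : ℝ≥0∞) ^ p) ^ (1/p) := rfl

open FourierTransform in
lemma FT_eq {n : ℕ} (φ : SchwartzMap (E n) ℂ) (ξ : E n) :
    FT n ⇑φ ξ = (((2 * Real.pi) ^ (-(n : ℝ) / 2) : ℝ) : ℂ) *
      (𝓕 ⇑φ) ((2 * Real.pi)⁻¹ • ξ) := by
  rw [Real.fourier_eq', FT]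
  congr 1
  refine (integral_congr_ae (Filter.Eventually.of_forall fun x => ?_)).symm
  have hinner : (inner ℝ x ((2 * Real.pi)⁻¹ • ξ) : ℝ) = (2 * Real.pi)⁻¹ * (inner ℝ x ξ : ℝ) :=
    real_inner_smul_right x ξ _
  rw [smul_eq_mul, hinner, mul_comm]
  congr 1
  have hπ : (2 * Real.pi) ≠ 0 := by positivity
  have : -2 * Real.pi * ((2 * Real.pi)⁻¹ * (inner ℝ x ξ : ℝ)) = -(inner ℝ x ξ : ℝ) := by
    field_simp
  rw [this]
  push_cast
  ring_nf

def scaleEquiv (n : ℕ) : E n ≃L[ℝ] E n :=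
  (LinearEquiv.smulOfNeZero ℝ (E n) ((2*Real.pi)⁻¹)
    (by positivity)).toContinuousLinearEquiv

lemma FT_schwartz {n : ℕ} (φ : SchwartzMap (E n) ℂ) :
    ∃ χ : SchwartzMap (E n) ℂ, ∀ ξ, FT n ⇑φ ξ = χ ξ := by
  refine ⟨(((2 * Real.pi) ^ (-(n : ℝ) / 2) : ℝ) : ℂ) •
    (SchwartzMap.compCLMOfContinuousLinearEquiv ℂ (scaleEquiv n)
      (SchwartzMap.fourierTransformCLM ℂ φ)), fun ξ => ?_⟩
  rw [FT_eq]
  simp only [SchwartzMap.smul_apply, SchwartzMap.compCLMOfContinuousLinearEquiv_apply,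
    Function.comp_apply, SchwartzMap.fourierTransformCLM_apply, smul_eq_mul, scaleEquiv]
  rfl

lemma invFT_eq {n : ℕ} (g : E n → ℂ) (x : E n) : invFT n g x = FT n g (-x) := by
  rw [invFT, FT]
  congr 1
  refine integral_congr_ae (Filter.Eventually.of_forall fun t => ?_)
  show g t * Complex.exp (Complex.I * ((inner ℝ x t : ℝ) : ℂ)) =
    g t * Complex.exp (-(Complex.I * ((inner ℝ t (-x) : ℝ) : ℂ)))
  congr 1
  have h1 : (inner ℝ t (-x) : ℝ) = -(inner ℝ x t : ℝ) := by
    rw [inner_neg_right, real_inner_comm]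
  rw [h1]
  push_cast
  ring_nf

lemma integrable_weight {n : ℕ} (s : ℝ) (χ : SchwartzMap (E n) ℂ) :
    Integrable (fun ξ : E n => (1 + ‖ξ‖ ^ 2) ^ s * ‖χ ξ‖ ^ 2) volume := by
  obtain ⟨M, hM⟩ := χ.decay 0 0
  have hMx : ∀ x, ‖χ x‖ ≤ M := fun x => by simpa using hM.2 x
  have hM0 : 0 ≤ M := le_trans (norm_nonneg _) (hMx 0)
  set m : ℕ := ⌈s⌉₊ with hmdef
  have hdom : Integrable (fun ξ : E n => (M * 2 ^ m) * (‖χ ξ‖ + ‖ξ‖ ^ (2*m) * ‖χ ξ‖)) volume :=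
    ((χ.integrable (μ := volume)).norm.add (χ.integrable_pow_mul volume (2*m))).const_mul _
  refine hdom.mono' ?_ (Filter.Eventually.of_forall fun ξ => ?_)
  · apply Continuous.aestronglyMeasurable
    exact ((continuous_const.add ((continuous_norm).pow 2)).rpow_const
      (fun ξ => Or.inl (by positivity : (1:ℝ) + ‖ξ‖ ^ 2 ≠ 0))).mul ((χ.continuous.norm).pow 2)
  · rw [Real.norm_eq_abs, _root_.abs_of_nonneg (by positivity)]
    have h1 : (1 + ‖ξ‖ ^ 2) ^ s ≤ (1 + ‖ξ‖ ^ 2) ^ (m:ℝ) :=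
      Real.rpow_le_rpow_of_exponent_le (by nlinarith [sq_nonneg ‖ξ‖]) (Nat.le_ceil s)
    rw [Real.rpow_natCast] at h1
    have h2 : (1 + ‖ξ‖ ^ 2) ^ m ≤ 2 ^ m * (1 + ‖ξ‖ ^ (2*m)) := by
      rcases le_total (‖ξ‖ ^ 2) 1 with h | h
      · calc (1 + ‖ξ‖ ^ 2) ^ m ≤ 2 ^ m :=
              pow_le_pow_left₀ (by positivity) (by linarith) m
          _ ≤ 2 ^ m * (1 + ‖ξ‖ ^ (2*m)) := by
              nlinarith [pow_nonneg (norm_nonneg ξ) (2*m),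
                pow_pos (zero_lt_two : (0:ℝ) < 2) m]
      · have h3 : (1 + ‖ξ‖ ^ 2) ^ m ≤ (2 * ‖ξ‖ ^ 2) ^ m :=
          pow_le_pow_left₀ (by positivity) (by linarith) m
        rw [mul_pow, ← pow_mul] at h3
        refine h3.trans ?_
        nlinarith [pow_pos (zero_lt_two : (0:ℝ) < 2) m]
    have h3 : ‖χ ξ‖ ^ 2 ≤ M * ‖χ ξ‖ := by
      nlinarith [hMx ξ, norm_nonneg (χ ξ)]
    calc (1 + ‖ξ‖ ^ 2) ^ s * ‖χ ξ‖ ^ 2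
        ≤ (2 ^ m * (1 + ‖ξ‖ ^ (2*m))) * (M * ‖χ ξ‖) :=
          mul_le_mul (h1.trans h2) h3 (by positivity) (by positivity)
      _ = (M * 2 ^ m) * (‖χ ξ‖ + ‖ξ‖ ^ (2*m) * ‖χ ξ‖) := by ring

lemma FT_L1_bound {n : ℕ} {s : ℝ} (hs : (n:ℝ)/2 < s) (φ : SchwartzMap (E n) ℂ) :
    ∫⁻ ξ : E n, (‖FT n ⇑φ ξ‖₊ : ℝ≥0∞) ≤
      ENNReal.ofReal ((∫ ξ : E n, ((1:ℝ) + ‖ξ‖ ^ 2) ^ (-s)) ^ (1/2:ℝ)) *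
        ENNReal.ofReal (HsNorm n s ⇑φ) := by
  have hs0 : (0:ℝ) < s := lt_of_le_of_lt (by positivity) hs
  obtain ⟨χ, hχ⟩ := FT_schwartz φ
  have hFTeq : FT n ⇑φ = ⇑χ := funext hχ
  have hcont : Continuous (FT n ⇑φ) := hFTeq ▸ χ.continuous
  have hw : Integrable (fun ξ : E n => (1 + ‖ξ‖ ^ 2) ^ s * ‖FT n ⇑φ ξ‖ ^ 2) volume := by
    rw [hFTeq]; exact integrable_weight s χ
  have hAint : Integrable (fun ξ : E n => ((1:ℝ) + ‖ξ‖ ^ 2) ^ (-s)) volume := by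
    have h := integrable_rpow_neg_one_add_norm_sq (E := E n) (μ := volume) (r := 2*s)
      (by rw [finrank_euclideanSpace_fin]; linarith)
    have : -(2*s)/2 = -s := by ring
    simpa [this] using h
  set A0 : ℝ := ∫ ξ : E n, ((1:ℝ) + ‖ξ‖ ^ 2) ^ (-s) with hA0def
  have hA0 : 0 ≤ A0 := integral_nonneg fun ξ => by positivity
  set u : E n → ℝ≥0∞ := fun ξ => ENNReal.ofReal ((1 + ‖ξ‖ ^ 2) ^ (-s/2)) with hudef
  set v : E n → ℝ≥0∞ := fun ξ =>
    ENNReal.ofReal ((1 + ‖ξ‖ ^ 2) ^ (s/2)) * (‖FT n ⇑φ ξ‖₊ : ℝ≥0∞) with hvdef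
  have hcu : Continuous (fun ξ : E n => (1 + ‖ξ‖ ^ 2) ^ (-s/2)) :=
    (continuous_const.add ((continuous_norm).pow 2)).rpow_const
      (fun ξ => Or.inl (by positivity : (1:ℝ) + ‖ξ‖ ^ 2 ≠ 0))
  have hcv : Continuous (fun ξ : E n => (1 + ‖ξ‖ ^ 2) ^ (s/2)) :=
    (continuous_const.add ((continuous_norm).pow 2)).rpow_const
      (fun ξ => Or.inl (by positivity : (1:ℝ) + ‖ξ‖ ^ 2 ≠ 0))
  have hum : Measurable u := hcu.measurable.ennreal_ofReal
  have hvm : Measurable v :=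
    (hcv.measurable.ennreal_ofReal).mul hcont.measurable.enorm
  have hconj : (2:ℝ).HolderConjugate 2 := Real.HolderConjugate.two_two
  have huv : ∀ ξ : E n, (‖FT n ⇑φ ξ‖₊ : ℝ≥0∞) = (u * v) ξ := by
    intro ξ
    show _ = u ξ * v ξ
    rw [hudef, hvdef, ← mul_assoc, ← ENNReal.ofReal_mul (by positivity),
      ← Real.rpow_add (by positivity), neg_div, neg_add_cancel, Real.rpow_zero,
      ENNReal.ofReal_one, one_mul]
  have hu2 : ∫⁻ ξ, u ξ ^ (2:ℝ) = ENNReal.ofReal A0 := by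
    rw [hA0def, ofReal_integral_eq_lintegral_ofReal hAint
      (Filter.Eventually.of_forall fun ξ => by positivity)]
    refine lintegral_congr fun ξ => ?_
    rw [hudef, ENNReal.ofReal_rpow_of_nonneg (by positivity) (by norm_num)]
    congr 1
    rw [← Real.rpow_mul (by positivity)]
    norm_num
  have hv2 : ∫⁻ ξ, v ξ ^ (2:ℝ) =
      ENNReal.ofReal (∫ ξ : E n, (1 + ‖ξ‖ ^ 2) ^ s * ‖FT n ⇑φ ξ‖ ^ 2) := by
    rw [ofReal_integral_eq_lintegral_ofReal hw
      (Filter.Eventually.of_forall fun ξ => by positivity)]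
    refine lintegral_congr fun ξ => ?_
    rw [hvdef]
    show (ENNReal.ofReal ((1 + ‖ξ‖ ^ 2) ^ (s/2)) * (‖FT n ⇑φ ξ‖₊ : ℝ≥0∞)) ^ (2:ℝ) = _
    rw [← enorm_eq_nnnorm, ← ofReal_norm, ← ENNReal.ofReal_mul (by positivity),
      ENNReal.ofReal_rpow_of_nonneg (by positivity) (by norm_num)]
    congr 1
    rw [Real.mul_rpow (by positivity) (norm_nonneg _)]
    congr 1
    · rw [← Real.rpow_mul (by positivity)]
      norm_num
    · rw [Real.rpow_two]
  calc ∫⁻ ξ : E n, (‖FT n ⇑φ ξ‖₊ : ℝ≥0∞) = ∫⁻ ξ, (u * v) ξ := lintegral_congr huv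
    _ ≤ (∫⁻ ξ, u ξ ^ (2:ℝ)) ^ (1/2:ℝ) * (∫⁻ ξ, v ξ ^ (2:ℝ)) ^ (1/2:ℝ) :=
        ENNReal.lintegral_mul_le_Lp_mul_Lq volume hconj hum.aemeasurable hvm.aemeasurable
    _ = ENNReal.ofReal (A0 ^ (1/2:ℝ)) * ENNReal.ofReal (HsNorm n s ⇑φ) := by
        rw [hu2, hv2, ENNReal.ofReal_rpow_of_nonneg hA0 (by norm_num),
          ENNReal.ofReal_rpow_of_nonneg (integral_nonneg fun ξ => by positivity) (by norm_num),
          HsNorm, Real.sqrt_eq_rpow]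


/-- Bernstein's multiplier estimate: for `s > n/2` and `1 ≤ r ≤ ∞`
there is `C > 0` with `‖𝓕⁻¹(φ 𝓕 f)‖_{L^r} = ‖(2π)^{-n/2}(𝓕⁻¹φ) ∗ f‖_{L^r}
≤ C ‖φ‖_{H^s} ‖f‖_{L^r}`. -/
theorem bernstein_multiplier_estimate (n : ℕ) (s : ℝ) (hs : (n : ℝ) / 2 < s)
    (r : ℝ≥0∞) (hr : 1 ≤ r) :
    ∃ C : ℝ, 0 < C ∧
      ∀ (φ : SchwartzMap (E n) ℂ) (f : E n → ℂ),
        MemLp f r (volume : Measure (E n)) →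
        eLpNorm
            (fun x : E n =>
              (((2 * Real.pi) ^ (-(n : ℝ) / 2) : ℝ) : ℂ) *
                ∫ y : E n, invFT n (⇑φ) y * f (x - y))
            r (volume : Measure (E n)) ≤
          ENNReal.ofReal (C * HsNorm n s ⇑φ) * eLpNorm f r (volume : Measure (E n)) := by
  set c : ℝ := (2 * Real.pi) ^ (-(n : ℝ) / 2) with hcdef
  have hc : 0 < c := by rw [hcdef]; positivity
  set A0 : ℝ := ∫ ξ : E n, ((1:ℝ) + ‖ξ‖ ^ 2) ^ (-s) with hA0def
  have hA0 : 0 ≤ A0 := integral_nonneg fun ξ => by positivity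
  refine ⟨c * A0 ^ (1/2:ℝ) + 1, by positivity, fun φ f hf => ?_⟩
  obtain ⟨χ, hχ⟩ := FT_schwartz φ
  have hFTeq : FT n ⇑φ = ⇑χ := funext hχ
  have hinvk : invFT n ⇑φ = fun y => χ (-y) := by
    funext y
    rw [invFT_eq, hχ]
  have hkm : Measurable (invFT n ⇑φ) := by
    rw [hinvk]
    exact (χ.continuous.comp continuous_neg).measurable
  have hHs : 0 ≤ HsNorm n s ⇑φ := Real.sqrt_nonneg _
  have hsmul : (fun x : E n => ((c : ℝ) : ℂ) * ∫ y : E n, invFT n (⇑φ) y * f (x - y)) =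
      ((c : ℝ) : ℂ) • (fun x : E n => ∫ y : E n, invFT n (⇑φ) y * f (x - y)) := rfl
  have hnegint : ∫⁻ y : E n, (‖invFT n ⇑φ y‖₊ : ℝ≥0∞) = ∫⁻ ξ : E n, (‖FT n ⇑φ ξ‖₊ : ℝ≥0∞) := by
    simp_rw [invFT_eq]
    exact (Measure.measurePreserving_neg volume).lintegral_comp_emb
      (MeasurableEquiv.neg (E n)).measurableEmbedding fun ξ => (‖FT n ⇑φ ξ‖₊ : ℝ≥0∞)
  have hcnn : ‖((c : ℝ) : ℂ)‖ₑ = ENNReal.ofReal c := by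
    rw [← Real.enorm_eq_ofReal hc.le, enorm_eq_nnnorm, enorm_eq_nnnorm]
    congr 1
    simp [nnnorm]
  calc eLpNorm (fun x : E n => ((c : ℝ) : ℂ) * ∫ y : E n, invFT n (⇑φ) y * f (x - y)) r volume
      = ENNReal.ofReal c *
          eLpNorm (fun x : E n => ∫ y : E n, invFT n (⇑φ) y * f (x - y)) r volume := by
        rw [hsmul, eLpNorm_const_smul, hcnn]
    _ ≤ ENNReal.ofReal c * ((∫⁻ y : E n, (‖invFT n ⇑φ y‖₊ : ℝ≥0∞)) * eLpNorm f r volume) :=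
        mul_le_mul_right (young _ f hkm hf.1 r hr) _
    _ = ENNReal.ofReal c * ((∫⁻ ξ : E n, (‖FT n ⇑φ ξ‖₊ : ℝ≥0∞)) * eLpNorm f r volume) := by
        rw [hnegint]
    _ ≤ ENNReal.ofReal c *
          ((ENNReal.ofReal (A0 ^ (1/2:ℝ)) * ENNReal.ofReal (HsNorm n s ⇑φ)) *
            eLpNorm f r volume) :=
        mul_le_mul_right (mul_le_mul_left (FT_L1_bound hs φ) _) _
    _ = ENNReal.ofReal (c * (A0 ^ (1/2:ℝ) * HsNorm n s ⇑φ)) * eLpNorm f r volume := by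
        rw [ENNReal.ofReal_mul hc.le, ENNReal.ofReal_mul (by positivity), mul_assoc,
          mul_assoc, mul_assoc]
    _ ≤ ENNReal.ofReal ((c * A0 ^ (1/2:ℝ) + 1) * HsNorm n s ⇑φ) * eLpNorm f r volume := by
        refine mul_le_mul_left (ENNReal.ofReal_le_ofReal ?_) _
        have h1 : c * A0 ^ (1/2:ℝ) ≤ c * A0 ^ (1/2:ℝ) + 1 := by linarith
        calc c * (A0 ^ (1/2:ℝ) * HsNorm n s ⇑φ) = (c * A0 ^ (1/2:ℝ)) * HsNorm n s ⇑φ := by ring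
          _ ≤ (c * A0 ^ (1/2:ℝ) + 1) * HsNorm n s ⇑φ := mul_le_mul_of_nonneg_right h1 hHs

end
end

section
/- Let s > 1. Then there exists δ ∈ (0,1) depending only on s (one may take δ = 2 − 2^{1/s}) such that for all k, l ∈ ℤⁿ, e^{|k|^{1/s}} ≤ e^{|l|^{1/s}} · e^{|l−k|^{1/s}} · e^{−δ · min(|l−k|, |l|)^{1/s}}, where |·| denotes the Euclidean norm on ℝⁿ. -/
open scoped Real BigOperators

noncomputable section

/-- The Euclidean norm of a lattice point `k ∈ ℤⁿ`. -/
def znorm {n : ℕ} (k : Fin n → ℤ) : ℝ :=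
  Real.sqrt (∑ i, ((k i : ℝ)) ^ 2)

lemma znorm_nonneg {n : ℕ} (k : Fin n → ℤ) : 0 ≤ znorm k := Real.sqrt_nonneg _

def toE {n : ℕ} (k : Fin n → ℤ) : EuclideanSpace ℝ (Fin n) :=
  (WithLp.equiv 2 (Fin n → ℝ)).symm (fun i => (k i : ℝ))

lemma znorm_eq_norm {n : ℕ} (k : Fin n → ℤ) : znorm k = ‖toE k‖ := by
  rw [EuclideanSpace.norm_eq, znorm]
  congr 1
  refine Finset.sum_congr rfl fun i _ => ?_
  simp [toE, sq_abs]

lemma znorm_triangle {n : ℕ} (k l : Fin n → ℤ) :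
    znorm k ≤ znorm l + znorm (l - k) := by
  rw [znorm_eq_norm, znorm_eq_norm, znorm_eq_norm]
  have : toE k = toE l - toE (l - k) := by
    ext i; simp [toE, WithLp.equiv_symm_apply, PiLp.toLp_apply]
  rw [this]
  exact norm_sub_le _ _

/-- key scalar inequality: for `0 < θ < 1` and `0 ≤ b ≤ a`,
`(a+b)^θ + (2 - 2^θ) b^θ ≤ a^θ + b^θ`. -/
lemma key_ineq {θ a b : ℝ} (hθ0 : 0 < θ) (hθ1 : θ < 1) (hb : 0 ≤ b) (hba : b ≤ a) :
    (a + b) ^ θ + (2 - (2:ℝ) ^ θ) * b ^ θ ≤ a ^ θ + b ^ θ := by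
  have ha : 0 ≤ a := hb.trans hba
  rcases eq_or_lt_of_le ha with rfl | hapos
  · have hb0 : b = 0 := le_antisymm hba hb
    subst hb0
    simp [Real.zero_rpow hθ0.ne']
  · -- main step: (a+b)^θ + b^θ ≤ a^θ + (2b)^θ by concavity
    have hconc := Real.concaveOn_rpow hθ0.le hθ1.le
    set t : ℝ := b / a with ht
    have ht0 : 0 ≤ t := div_nonneg hb hapos.le
    have ht1 : t ≤ 1 := div_le_one_of_le₀ hba hapos.le
    have habmem : (a + b) ∈ Set.Ici (0:ℝ) := Set.mem_Ici.2 (by positivity)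
    have hbmem : b ∈ Set.Ici (0:ℝ) := hb
    have h1 : t • (b:ℝ) ^ θ + (1 - t) • (a + b) ^ θ ≤ (t • b + (1 - t) • (a + b)) ^ θ :=
      hconc.2 hbmem habmem ht0 (by linarith) (by ring)
    have h2 : (1 - t) • (b:ℝ) ^ θ + t • (a + b) ^ θ ≤ ((1 - t) • b + t • (a + b)) ^ θ :=
      hconc.2 hbmem habmem (by linarith) ht0 (by ring)
    have hta : t * a = b := div_mul_cancel₀ b hapos.ne'
    have e1 : t • b + (1 - t) • (a + b) = a := by
      simp only [smul_eq_mul]; nlinarith [hta]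
    have e2 : (1 - t) • b + t • (a + b) = 2 * b := by
      simp only [smul_eq_mul]; nlinarith [hta]
    rw [e1] at h1; rw [e2] at h2
    have h2b : ((2:ℝ) * b) ^ θ = 2 ^ θ * b ^ θ := Real.mul_rpow (by norm_num) hb
    rw [h2b] at h2
    simp only [smul_eq_mul] at h1 h2
    nlinarith [h1, h2]

/-- for `s > 1` there is `δ ∈ (0,1)` (depending only on `s`;
one may take `δ = 2 - 2^{1/s}`) such that for all `k, l ∈ ℤⁿ`,
`e^{|k|^{1/s}} ≤ e^{|l|^{1/s}} e^{|l-k|^{1/s}} e^{-δ min(|l-k|,|l|)^{1/s}}`. -/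
theorem weight_submultiplicativity (s : ℝ) (hs : 1 < s) :
    ∃ δ : ℝ, 0 < δ ∧ δ < 1 ∧
      ∀ (n : ℕ) (k l : Fin n → ℤ),
        Real.exp (znorm k ^ (1 / s)) ≤
          Real.exp (znorm l ^ (1 / s)) * Real.exp (znorm (l - k) ^ (1 / s)) *
            Real.exp (-δ * min (znorm (l - k)) (znorm l) ^ (1 / s)) := by
  have hθ0 : 0 < 1 / s := by positivity
  have hθ1 : 1 / s < 1 := by rw [div_lt_one (by linarith)]; linarith
  have h2pos : (1:ℝ) < 2 ^ (1/s) := by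
    have := Real.one_lt_rpow_iff_of_pos (x := 2) (by norm_num) (y := 1/s)
    rw [this]; left; exact ⟨by norm_num, hθ0⟩
  have h2lt : (2:ℝ) ^ (1/s) < 2 := by
    calc (2:ℝ) ^ (1/s) < 2 ^ (1:ℝ) := by
          apply Real.rpow_lt_rpow_left_iff (x := 2) (by norm_num) |>.2 hθ1
      _ = 2 := Real.rpow_one 2
  refine ⟨2 - 2 ^ (1/s), by linarith, by linarith, fun n k l => ?_⟩
  rw [← Real.exp_add, ← Real.exp_add, Real.exp_le_exp]
  set θ := 1 / s
  set b := min (znorm (l - k)) (znorm l) with hbdef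
  set a := max (znorm (l - k)) (znorm l) with hadef
  have hb : 0 ≤ b := le_min (znorm_nonneg _) (znorm_nonneg _)
  have hba : b ≤ a := min_le_max
  have hsum : a + b = znorm l + znorm (l - k) := by
    rw [hadef, hbdef, add_comm]; rw [min_add_max (znorm (l - k)) (znorm l)]; ring
  have hk : znorm k ≤ a + b := by rw [hsum]; exact znorm_triangle k l
  have hkθ : znorm k ^ θ ≤ (a + b) ^ θ :=
    Real.rpow_le_rpow (znorm_nonneg _) hk hθ0.le
  have key := key_ineq hθ0 hθ1 hb hba
  have hsplit : a ^ θ + b ^ θ = znorm l ^ θ + znorm (l - k) ^ θ := by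
    rcases max_cases (znorm (l - k)) (znorm l) with ⟨h1, h2⟩ | ⟨h1, h2⟩ <;>
      rcases min_cases (znorm (l - k)) (znorm l) with ⟨h3, h4⟩ | ⟨h3, h4⟩ <;>
      rw [hadef, hbdef, h1, h3] <;> ring_nf <;>
      first
        | rfl
        | (have : znorm (l - k) = znorm l := le_antisymm (by linarith) (by linarith);
           rw [this]; ring)
  nlinarith [hkθ, key, hsplit]

end
end

section
/- Let α > 0 and define f(t) = ∫_t^∞ e^{−y} y^{α−1} dy for t ≥ 0. Then f is a continuous strictly decreasing bijection from [0,∞) onto (0, Γ(α)], and its inverse g : (0, Γ(α)] → [0,∞) satisfies lim_{u → 0⁺} g(u) / log(1/u) = 1. -/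
open MeasureTheory Filter Set
open scoped Real Topology

noncomputable section
namespace GTA

def F (α : ℝ) (t : ℝ) : ℝ := ∫ y in Set.Ioi t, Real.exp (-y) * y ^ (α - 1)

variable {α : ℝ}

lemma hInt (hα : 0 < α) {t : ℝ} (ht : 0 ≤ t) :
    IntegrableOn (fun y : ℝ => Real.exp (-y) * y ^ (α - 1)) (Ioi t) :=
  (Real.GammaIntegral_convergent hα).mono_set (Ioi_subset_Ioi ht)

lemma hIntIoc (hα : 0 < α) {s t : ℝ} (hs : 0 ≤ s) :
    IntegrableOn (fun y : ℝ => Real.exp (-y) * y ^ (α - 1)) (Ioc s t) :=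
  (hInt hα hs).mono_set Ioc_subset_Ioi_self

lemma integrand_pos (hα : 0 < α) {y : ℝ} (hy : 0 < y) :
    0 < Real.exp (-y) * y ^ (α - 1) :=
  mul_pos (Real.exp_pos _) (Real.rpow_pos_of_pos hy _)

lemma F_split (hα : 0 < α) {s t : ℝ} (hs : 0 ≤ s) (hst : s ≤ t) :
    F α s = (∫ y in Set.Ioc s t, Real.exp (-y) * y ^ (α - 1)) + F α t := by
  rw [F, F, ← Ioc_union_Ioi_eq_Ioi hst,
    setIntegral_union (Ioc_disjoint_Ioi le_rfl) measurableSet_Ioi (hIntIoc hα hs)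
      (hInt hα (hs.trans hst))]

lemma Ioc_pos (hα : 0 < α) {s t : ℝ} (hs : 0 ≤ s) (hst : s < t) :
    0 < ∫ y in Set.Ioc s t, Real.exp (-y) * y ^ (α - 1) := by
  rw [setIntegral_pos_iff_support_of_nonneg_ae ?_ (hIntIoc hα hs)]
  · have : (Function.support fun y : ℝ => Real.exp (-y) * y ^ (α - 1)) ∩ Ioc s t = Ioc s t := by
      refine inter_eq_self_of_subset_right fun y hy => ?_
      exact (integrand_pos hα (hs.trans_lt hy.1)).ne'
    rw [this, Real.volume_Ioc]
    exact ENNReal.ofReal_pos.2 (sub_pos.2 hst)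
  · filter_upwards [ae_restrict_mem measurableSet_Ioc] with y hy
    exact (integrand_pos hα (hs.trans_lt hy.1)).le

lemma F_nonneg (hα : 0 < α) {t : ℝ} (ht : 0 ≤ t) : 0 ≤ F α t := by
  refine setIntegral_nonneg measurableSet_Ioi fun y hy => ?_
  exact (integrand_pos hα (ht.trans_lt hy)).le

lemma F_pos (hα : 0 < α) {t : ℝ} (ht : 0 ≤ t) : 0 < F α t := by
  have h := F_split hα ht (le_add_of_nonneg_right zero_le_one : t ≤ t + 1)
  have h1 := Ioc_pos hα ht (lt_add_of_pos_right t one_pos)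
  have h2 := F_nonneg hα (by linarith : (0:ℝ) ≤ t + 1)
  linarith [h, h1, h2]

lemma F_zero (hα : 0 < α) : F α 0 = Real.Gamma α := (Real.Gamma_eq_integral hα).symm

lemma F_anti (hα : 0 < α) : StrictAntiOn (F α) (Ici (0:ℝ)) := by
  intro s hs t ht hst
  have h := F_split hα hs hst.le
  have h1 := Ioc_pos hα hs hst
  linarith

lemma F_le_Gamma (hα : 0 < α) {t : ℝ} (ht : 0 ≤ t) : F α t ≤ Real.Gamma α := by
  rcases eq_or_lt_of_le ht with rfl | h
  · exact (F_zero hα).le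
  · exact le_of_lt (by simpa [F_zero hα] using F_anti hα self_mem_Ici ht h)

lemma F_cont (hα : 0 < α) : ContinuousOn (F α) (Ici (0:ℝ)) := by
  intro t ht
  have hb : t < t + 1 := lt_add_of_pos_right t one_pos
  have hIcc : ContinuousOn (F α) (Icc (0:ℝ) (t+1)) := by
    have h1 : ContinuousOn (fun x => F α 0 - ∫ y in Set.Ioc 0 x, Real.exp (-y) * y ^ (α - 1))
        (Icc (0:ℝ) (t+1)) := by
      refine continuousOn_const.sub ?_
      exact intervalIntegral.continuousOn_primitive ((integrableOn_Icc_iff_integrableOn_Ioc).2 (hIntIoc hα le_rfl))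
    refine h1.congr fun x hx => ?_
    rw [F_split hα le_rfl hx.1]; ring
  refine (hIcc t ⟨ht, by linarith⟩).mono_of_mem_nhdsWithin ?_
  rw [← Ici_inter_Iic]
  exact inter_mem_nhdsWithin _ (Iic_mem_nhds (by linarith))

lemma F_tendsto_zero (hα : 0 < α) : Tendsto (F α) atTop (𝓝 0) := by
  have h : Tendsto (fun t : ℝ => ∫ y in (0:ℝ)..t, Real.exp (-y) * y ^ (α - 1)) atTop
      (𝓝 (F α 0)) := intervalIntegral_tendsto_integral_Ioi 0 (hInt hα le_rfl) tendsto_id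
  have h2 : Tendsto (fun t : ℝ => F α 0 - ∫ y in (0:ℝ)..t, Real.exp (-y) * y ^ (α - 1)) atTop
      (𝓝 (F α 0 - F α 0)) := tendsto_const_nhds.sub h
  rw [sub_self] at h2
  refine h2.congr' ?_
  filter_upwards [Ioi_mem_atTop (0:ℝ)] with t ht
  rw [intervalIntegral.integral_of_le ht.le, F_split hα le_rfl ht.le]; ring

lemma F_bijOn (hα : 0 < α) :
    Set.BijOn (F α) (Ici (0:ℝ)) (Ioc 0 (Real.Gamma α)) := by
  refine ⟨fun t ht => ⟨F_pos hα ht, F_le_Gamma hα ht⟩, F_anti hα |>.injOn, ?_⟩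
  intro u hu
  obtain ⟨T, hT⟩ : ∃ T : ℝ, 0 ≤ T ∧ F α T < u := by
    have := (F_tendsto_zero hα).eventually (eventually_lt_nhds hu.1)  -- F α t < u eventually
    obtain ⟨T, hT⟩ := ((this.and (eventually_ge_atTop (0:ℝ))).exists)
    exact ⟨T, hT.2, hT.1⟩
  have hsub : Icc (F α T) (F α 0) ⊆ F α '' Icc 0 T :=
    intermediate_value_Icc' hT.1 ((F_cont hα).mono Icc_subset_Ici_self)
  have hu' : u ∈ Icc (F α T) (F α 0) := ⟨hT.2.le, by rw [F_zero hα]; exact hu.2⟩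
  obtain ⟨x, hx, hxu⟩ := hsub hu'
  exact ⟨x, hx.1, hxu⟩
lemma F_lower (hα : 0 < α) {t : ℝ} (ht : 1 ≤ t) :
    (1 - Real.exp (-1)) * Real.exp (-t) * (t+1) ^ (-|α-1|) ≤ F α t := by
  have ht0 : (0:ℝ) ≤ t := by linarith
  have h1 : F α t = (∫ y in Set.Ioc t (t+1), Real.exp (-y) * y ^ (α - 1)) + F α (t+1) :=
    F_split hα ht0 (by linarith)
  have h2 : (∫ y in Set.Ioc t (t+1), (t+1) ^ (-|α-1|) * Real.exp (-y)) ≤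
      ∫ y in Set.Ioc t (t+1), Real.exp (-y) * y ^ (α - 1) := by
    refine setIntegral_mono_on ((Continuous.integrableOn_Ioc (by continuity)))
      (hIntIoc hα ht0) measurableSet_Ioc fun y hy => ?_
    have hy1 : (1:ℝ) ≤ y := le_of_lt (lt_of_le_of_lt ht hy.1)
    have hy0 : (0:ℝ) < y := by linarith
    have e1 : ((t:ℝ)+1) ^ (-|α-1|) ≤ y ^ (-|α-1|) :=
      Real.rpow_le_rpow_of_nonpos hy0 hy.2 (neg_nonpos.2 (abs_nonneg _))
    have e2 : y ^ (-|α-1|) ≤ y ^ (α - 1) :=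
      Real.rpow_le_rpow_of_exponent_le hy1 (neg_abs_le _)
    calc (t+1) ^ (-|α-1|) * Real.exp (-y) ≤ y ^ (α-1) * Real.exp (-y) := by
          exact mul_le_mul_of_nonneg_right (e1.trans e2) (Real.exp_pos _).le
      _ = Real.exp (-y) * y ^ (α-1) := mul_comm _ _
  have h3 : (∫ y in Set.Ioc t (t+1), (t+1) ^ (-|α-1|) * Real.exp (-y)) =
      (t+1) ^ (-|α-1|) * (Real.exp (-t) - Real.exp (-(t+1))) := by
    rw [integral_const_mul]
    congr 1
    have : (∫ y in Set.Ioc t (t+1), Real.exp (-y)) = ∫ y in t..(t+1), Real.exp (-y) := by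
      rw [intervalIntegral.integral_of_le (by linarith)]
    rw [this, intervalIntegral.integral_comp_neg (fun x => Real.exp x), integral_exp]
  have h4 : F α (t+1) ≥ 0 := F_nonneg hα (by linarith)
  have h5 : (1 - Real.exp (-1)) * Real.exp (-t) * (t+1) ^ (-|α-1|) =
      (t+1) ^ (-|α-1|) * (Real.exp (-t) - Real.exp (-(t+1))) := by
    have : Real.exp (-(t+1)) = Real.exp (-t) * Real.exp (-1) := by
      rw [← Real.exp_add]; ring_nf
    rw [this]; ring
  linarith [h2, h1, h3 ▸ h2]

lemma integral_exp_decay {t b : ℝ} (hb : 0 < b) :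
    (∫ y in Set.Ioi t, Real.exp (-(b*y))) = Real.exp (-(b*t)) / b := by
  have hderiv : ∀ y ∈ Ici t, HasDerivAt (fun y => -Real.exp (-(b*y)) / b)
      (Real.exp (-(b*y))) y := by
    intro y _
    have h0 : HasDerivAt (fun y : ℝ => -(b*y)) (-b) y := by
      simpa using ((hasDerivAt_id y).const_mul (-b))
    have h1 := (h0.exp.neg).div_const b
    refine h1.congr_deriv ?_
    rw [mul_neg, neg_neg, mul_div_assoc, div_self hb.ne', mul_one]
  have htend : Tendsto (fun y => -Real.exp (-(b*y)) / b) atTop (𝓝 0) := by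
    have h2 : Tendsto (fun y : ℝ => -(b*y)) atTop atBot := by
      exact tendsto_neg_atTop_atBot.comp (Tendsto.const_mul_atTop hb (tendsto_id (α := ℝ)))
    have h3 := (Real.tendsto_exp_atBot.comp h2).neg.div_const b
    simpa using h3
  have hint : IntegrableOn (fun y => Real.exp (-(b*y))) (Ioi t) := by
    have := exp_neg_integrableOn_Ioi t hb
    simpa only [neg_mul] using this
  have := integral_Ioi_of_hasDerivAt_of_tendsto' hderiv hint htend
  rw [this]; ring

lemma F_upper (hα : 0 < α) {ε : ℝ} (hε : 0 < ε) (hε1 : ε < 1) :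
    ∀ᶠ t in atTop, F α t ≤ Real.exp (-((1-ε)*t)) / (1-ε) := by
  have hlo : (fun y : ℝ => |α - 1| * Real.log y) =o[atTop] id :=
    Real.isLittleO_log_id_atTop.const_mul_left _
  have hev : ∀ᶠ y : ℝ in atTop, Real.exp (-y) * y ^ (α-1) ≤ Real.exp (-((1-ε)*y)) := by
    filter_upwards [hlo.def hε, eventually_ge_atTop (1:ℝ)] with y h1 h2
    have hy0 : (0:ℝ) < y := by linarith
    have e1 : y ^ (α-1) ≤ y ^ |α-1| :=
      Real.rpow_le_rpow_of_exponent_le h2 (le_abs_self _)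
    have e2 : y ^ |α-1| = Real.exp (Real.log y * |α-1|) := Real.rpow_def_of_pos hy0 _
    have e3 : Real.log y * |α-1| ≤ ε * y := by
      have := h1 -- ‖|α-1| * log y‖ ≤ ε * ‖y‖
      rw [Real.norm_eq_abs, Real.norm_eq_abs] at this
      calc Real.log y * |α-1| = |α-1| * Real.log y := mul_comm _ _
        _ ≤ |(|α-1| * Real.log y)| := le_abs_self _
        _ ≤ ε * |y| := this
        _ = ε * y := by rw [abs_of_pos hy0]
    calc Real.exp (-y) * y ^ (α-1) ≤ Real.exp (-y) * Real.exp (ε * y) := by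
          refine mul_le_mul_of_nonneg_left ?_ (Real.exp_pos _).le
          rw [e2] at e1
          exact (e1.trans (Real.exp_le_exp.2 e3))
      _ = Real.exp (-((1-ε)*y)) := by rw [← Real.exp_add]; ring_nf
  rw [eventually_atTop] at hev
  obtain ⟨T, hT⟩ := hev
  filter_upwards [eventually_ge_atTop (max T 0), eventually_ge_atTop (0:ℝ)] with t ht ht0
  have hTt : T ≤ t := le_trans (le_max_left _ _) ht
  calc F α t ≤ ∫ y in Set.Ioi t, Real.exp (-((1-ε)*y)) := by
        refine setIntegral_mono_on (hInt hα ht0) ?_ measurableSet_Ioi fun y hy => ?_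
        · have hb : (0:ℝ) < 1 - ε := by linarith
          have := exp_neg_integrableOn_Ioi t hb
          simpa only [neg_mul] using this
        · exact hT y (hTt.trans hy.le)
    _ = Real.exp (-((1-ε)*t)) / (1-ε) := integral_exp_decay (by linarith)

lemma aux_div_tendsto (a C : ℝ) :
    Tendsto (fun t : ℝ => (a * Real.log (t+1) - C) / t) atTop (𝓝 0) := by
  have h1 : Tendsto (fun t : ℝ => a * Real.log (t+1) / t) atTop (𝓝 0) := by
    have hlog : (fun t : ℝ => Real.log (t+1)) =o[atTop] (fun t : ℝ => t+1) :=
      Real.isLittleO_log_id_atTop.comp_tendsto (tendsto_atTop_add_const_right atTop 1 tendsto_id)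
    have hbig : (fun t : ℝ => t+1) =O[atTop] (fun t : ℝ => t) := by
      rw [Asymptotics.isBigO_iff]
      refine ⟨2, ?_⟩
      filter_upwards [eventually_ge_atTop (1:ℝ)] with t ht
      rw [Real.norm_eq_abs, Real.norm_eq_abs, abs_of_pos (by linarith), abs_of_pos (by linarith)]
      linarith
    have := ((hlog.trans_isBigO hbig).const_mul_left a).tendsto_div_nhds_zero
    simpa [mul_comm] using this
  have h2 : Tendsto (fun t : ℝ => C / t) atTop (𝓝 0) :=
    tendsto_const_nhds.div_atTop tendsto_id
  have := h1.sub h2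
  rw [sub_zero] at this
  refine this.congr fun t => ?_
  rw [sub_div]

lemma div_le_div_of_nonneg_right' {a b c : ℝ} (h : a ≤ b) (hc : 0 < c) : a / c ≤ b / c := by
  gcongr

lemma neg_log_F_div (hα : 0 < α) (hp : ∀ t : ℝ, 0 ≤ t → 0 < F α t) :
    Tendsto (fun t : ℝ => -Real.log (F α t) / t) atTop (𝓝 1) := by
  rw [tendsto_order]
  constructor
  · -- ∀ c < 1, eventually c < h t  (uses F_upper)
    intro c hc
    set ε : ℝ := min ((1-c)/2) (1/2) with hεdef
    have hε : 0 < ε := lt_min (by linarith) (by norm_num)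
    have hε1 : ε < 1 := lt_of_le_of_lt (min_le_right _ _) (by norm_num)
    have hcε : c < 1 - ε := by
      have : ε ≤ (1-c)/2 := min_le_left _ _
      linarith
    have hlim : Tendsto (fun t : ℝ => (1-ε) + Real.log (1-ε) / t) atTop (𝓝 (1-ε)) := by
      have := (tendsto_const_nhds (x := Real.log (1-ε))).div_atTop
        (tendsto_id (α := ℝ))
      simpa using (tendsto_const_nhds (x := (1-ε))).add this
    filter_upwards [F_upper hα hε hε1, hlim.eventually (eventually_gt_nhds hcε),
      eventually_gt_atTop (0:ℝ)] with t h1 h2 ht0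
    have hFpos : 0 < F α t := hp t ht0.le
    have hlog : Real.log (F α t) ≤ -((1-ε)*t) - Real.log (1-ε) := by
      calc Real.log (F α t) ≤ Real.log (Real.exp (-((1-ε)*t)) / (1-ε)) :=
            Real.log_le_log hFpos h1
        _ = -((1-ε)*t) - Real.log (1-ε) := by
            rw [Real.log_div (Real.exp_ne_zero _) (by linarith), Real.log_exp]
    have key : (1-ε) + Real.log (1-ε) / t ≤ -Real.log (F α t) / t := by
      have e : (1-ε) + Real.log (1-ε) / t = ((1-ε)*t + Real.log (1-ε)) / t := by
        field_simp
      rw [e]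
      have : (1-ε)*t + Real.log (1-ε) ≤ -Real.log (F α t) := by linarith
      exact div_le_div_of_nonneg_right' this ht0
    linarith [h2, key]
  · -- ∀ c > 1, eventually h t < c  (uses F_lower)
    intro c hc
    have hlim : Tendsto (fun t : ℝ => 1 + (|α-1| * Real.log (t+1) -
        Real.log (1 - Real.exp (-1))) / t) atTop (𝓝 1) := by
      simpa using (tendsto_const_nhds (x := (1:ℝ))).add (aux_div_tendsto _ _)
    filter_upwards [hlim.eventually (eventually_lt_nhds hc), eventually_ge_atTop (1:ℝ)]
      with t h2 ht1
    have ht0 : (0:ℝ) < t := by linarith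
    have hFpos : 0 < F α t := hp t ht0.le
    have hlow := F_lower hα ht1
    have h01 : (0:ℝ) < 1 - Real.exp (-1) := by
      have : Real.exp (-1) < Real.exp 0 := Real.exp_lt_exp.2 (by norm_num)
      rw [Real.exp_zero] at this
      linarith
    have hlpos : (0:ℝ) < (1 - Real.exp (-1)) * Real.exp (-t) * (t+1) ^ (-|α-1|) :=
      mul_pos (mul_pos h01 (Real.exp_pos _)) (Real.rpow_pos_of_pos (by linarith) _)
    have hlog : Real.log (1 - Real.exp (-1)) + (-t) + (-|α-1|) * Real.log (t+1) ≤
        Real.log (F α t) := by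
      have h4 := Real.log_le_log hlpos hlow
      rw [Real.log_mul (mul_pos h01 (Real.exp_pos _)).ne'
        (Real.rpow_pos_of_pos (by linarith) _).ne',
        Real.log_mul h01.ne' (Real.exp_ne_zero _), Real.log_exp,
        Real.log_rpow (by linarith)] at h4
      linarith
    have key : -Real.log (F α t) / t ≤ 1 + (|α-1| * Real.log (t+1) -
        Real.log (1 - Real.exp (-1))) / t := by
      have e : 1 + (|α-1| * Real.log (t+1) - Real.log (1 - Real.exp (-1))) / t =
          (t + (|α-1| * Real.log (t+1) - Real.log (1 - Real.exp (-1)))) / t := by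
        field_simp
      rw [e]
      have : -Real.log (F α t) ≤ t + (|α-1| * Real.log (t+1) -
          Real.log (1 - Real.exp (-1))) := by linarith
      exact div_le_div_of_nonneg_right' this ht0
    linarith [key, h2]

lemma g_final (hα : 0 < α) (g : ℝ → ℝ)
    (hg : Set.InvOn g (F α) (Ici (0:ℝ)) (Ioc 0 (Real.Gamma α))) :
    Tendsto (fun u : ℝ => g u / Real.log (1 / u)) (𝓝[>] (0 : ℝ)) (𝓝 1) := by
  have hΓ : 0 < Real.Gamma α := Real.Gamma_pos_of_pos hα
  have hgmem : ∀ u ∈ Ioc (0:ℝ) (Real.Gamma α), g u ∈ Ici (0:ℝ) := by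
    intro u hu
    obtain ⟨x, hx, hxu⟩ := (F_bijOn hα).surjOn hu
    rw [← hxu, hg.1 hx]
    exact hx
  have hgF : ∀ u ∈ Ioc (0:ℝ) (Real.Gamma α), F α (g u) = u := fun u hu => hg.2 hu
  -- g tends to atTop
  have hgtop : Tendsto g (𝓝[>] (0:ℝ)) atTop := by
    rw [tendsto_atTop]
    intro M
    set M' : ℝ := max M 0 with hM'
    have hM'0 : (0:ℝ) ≤ M' := le_max_right _ _
    have hb : 0 < F α M' := F_pos hα hM'0
    have hmem : Ioo (0:ℝ) (min (F α M') (Real.Gamma α)) ∈ 𝓝[>] (0:ℝ) :=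
      Ioo_mem_nhdsGT_of_mem ⟨le_rfl, lt_min hb hΓ⟩
    filter_upwards [hmem] with u hu
    have huIoc : u ∈ Ioc (0:ℝ) (Real.Gamma α) :=
      ⟨hu.1, le_of_lt (lt_of_lt_of_le hu.2 (min_le_right _ _))⟩
    have hgu : g u ∈ Ici (0:ℝ) := hgmem u huIoc
    by_contra hlt
    push_neg at hlt
    have hguM : g u < M' := lt_of_lt_of_le hlt (le_max_left _ _)
    have h5 : F α M' < F α (g u) := F_anti hα hgu hM'0 hguM
    rw [hgF u huIoc] at h5
    have h6 : u < F α M' := lt_of_lt_of_le hu.2 (min_le_left _ _)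
    linarith
  have hcomp : Tendsto (fun u => -Real.log (F α (g u)) / (g u)) (𝓝[>] (0:ℝ)) (𝓝 1) :=
    (neg_log_F_div hα (fun t ht => F_pos hα ht)).comp hgtop
  have h1 : Tendsto (fun u => 1 / (-Real.log (F α (g u)) / (g u))) (𝓝[>] (0:ℝ))
      (𝓝 1) := by
    have h := (tendsto_const_nhds (x := (1:ℝ))).div hcomp one_ne_zero
    rw [show (1:ℝ)/1 = 1 by norm_num] at h
    exact h.congr fun u => by simp [Pi.div_apply]
  refine h1.congr' ?_
  filter_upwards [Ioo_mem_nhdsGT_of_mem (⟨le_rfl, hΓ⟩ : (0:ℝ) ∈ Ico 0 (Real.Gamma α))]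
    with u hu
  have hu' : u ∈ Ioc (0:ℝ) (Real.Gamma α) := ⟨hu.1, hu.2.le⟩
  rw [hgF u hu', one_div u, Real.log_inv, one_div_div]

end GTA

/-- for `α > 0`, the incomplete Gamma tail
`f(t) = ∫_t^∞ e^{-y} y^{α-1} dy` is continuous and strictly decreasing on
`[0,∞)`, maps `[0,∞)` bijectively onto `(0, Γ(α)]`, and any inverse
`g : (0, Γ(α)] → [0,∞)` of `f` satisfies `g(u)/log(1/u) → 1` as `u → 0⁺`. -/
theorem gamma_tail_inverse_asymptotics (α : ℝ) (hα : 0 < α) :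
    (ContinuousOn (fun t : ℝ => ∫ y in Set.Ioi t, Real.exp (-y) * y ^ (α - 1))
        (Set.Ici (0 : ℝ))) ∧
    (StrictAntiOn (fun t : ℝ => ∫ y in Set.Ioi t, Real.exp (-y) * y ^ (α - 1))
        (Set.Ici (0 : ℝ))) ∧
    (Set.BijOn (fun t : ℝ => ∫ y in Set.Ioi t, Real.exp (-y) * y ^ (α - 1))
        (Set.Ici (0 : ℝ)) (Set.Ioc 0 (Real.Gamma α))) ∧
    (∀ g : ℝ → ℝ,
      Set.InvOn g (fun t : ℝ => ∫ y in Set.Ioi t, Real.exp (-y) * y ^ (α - 1))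
        (Set.Ici (0 : ℝ)) (Set.Ioc 0 (Real.Gamma α)) →
      Tendsto (fun u : ℝ => g u / Real.log (1 / u)) (𝓝[>] (0 : ℝ)) (𝓝 1)) :=
  ⟨GTA.F_cont hα, GTA.F_anti hα, GTA.F_bijOn hα, fun g hg => GTA.g_final hα g hg⟩

end
end
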